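/- Let G be a finite simple graph, k a natural number, and x : V(G) → ℝ an optimal fractional vertex cover of G. Let V_0 = {v : x(v) < 1/2} and V_1 = {v : x(v) > 1/2}, and suppose |V_1| ≤ k. Then G has a vertex cover of size at most k if and only if the graph G − (V_0 ∪ V_1) obtained by deleting all vertices of V_0 and V_1 has a vertex cover of size at most k − |V_1|. -/
import Mathlib


/-- `X` is a vertex cover of `G`: every edge has at least one endpoint in `X`. -/
def IsVC {V : Type*} (G : SimpleGraph V) (X : Set V) : Prop :=
  ∀ ⦃u w : V⦄, G.Adj u w → u ∈ X ∨ w ∈ X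

/-- `G` has a vertex cover of size at most `k`. -/
def HasVC {V : Type*} (G : SimpleGraph V) (k : ℕ) : Prop :=
  ∃ X : Set V, IsVC G X ∧ X.ncard ≤ k

/-- `x` is a fractional vertex cover of `G`. -/
def IsFracVC {V : Type*} (G : SimpleGraph V) (x : V → ℝ) : Prop :=
  (∀ v, 0 ≤ x v) ∧ ∀ ⦃u w : V⦄, G.Adj u w → 1 ≤ x u + x w

/-- The local-ratio / LP argument: for any vertex cover `X`,
`|V1 \ X| ≤ |X ∩ V0|`, else we could improve the optimal fractional cover. -/
lemma key {V : Type*} [Fintype V] (G : SimpleGraph V) (x : V → ℝ)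
    (hx : IsFracVC G x)
    (hopt : ∀ y : V → ℝ, IsFracVC G y → ∑ v, x v ≤ ∑ v, y v)
    (X : Set V) (hXvc : IsVC G X) :
    ({v : V | 1 / 2 < x v} \ X).ncard ≤ (X ∩ {v : V | x v < 1 / 2}).ncard := by
  classical
  by_contra hcon
  push_neg at hcon
  set P : V → Prop := fun v => 1 / 2 < x v ∧ v ∉ X with hP
  set Q : V → Prop := fun v => v ∈ X ∧ x v < 1 / 2 with hQ
  set A : Finset V := Finset.univ.filter P with hA
  set B : Finset V := Finset.univ.filter Q with hB
  have hAcard : ({v : V | 1 / 2 < x v} \ X).ncard = A.card := by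
    rw [show ({v : V | 1 / 2 < x v} \ X) = (↑A : Set V) by
      ext v; simp [hA, hP, Set.mem_diff]]
    exact Set.ncard_coe_finset A
  have hBcard : (X ∩ {v : V | x v < 1 / 2}).ncard = B.card := by
    rw [show (X ∩ {v : V | x v < 1 / 2}) = (↑B : Set V) by
      ext v; simp [hB, hQ, Set.mem_inter_iff]]
    exact Set.ncard_coe_finset B
  rw [hAcard, hBcard] at hcon
  have hAne : A.Nonempty := Finset.card_pos.mp (lt_of_le_of_lt (Nat.zero_le _) hcon)
  set ε : ℝ := A.inf' hAne (fun v => x v - 1 / 2) with hε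
  have hεpos : 0 < ε := by
    rw [hε, Finset.lt_inf'_iff]
    intro v hv
    have : P v := (Finset.mem_filter.mp hv).2
    linarith [this.1]
  have hεle : ∀ v, P v → ε ≤ x v - 1 / 2 := by
    intro v hv
    exact Finset.inf'_le _ (Finset.mem_filter.mpr ⟨Finset.mem_univ v, hv⟩)
  have hPQ : ∀ v, P v → ¬ Q v := by
    intro v hv hq; linarith [hv.1, hq.2]
  set y : V → ℝ := fun v => x v + ((if Q v then ε else 0) - (if P v then ε else 0)) with hy
  have hyfrac : IsFracVC G y := by
    constructor
    · intro v
      by_cases hPv : P v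
      · simp only [hy, hPQ v hPv, if_neg, if_pos hPv]
        have := hεle v hPv; simp; linarith
      · by_cases hQv : Q v
        · simp only [hy, if_pos hQv, if_neg hPv]; linarith [hx.1 v, hεpos.le]
        · simp only [hy, if_neg hQv, if_neg hPv]; linarith [hx.1 v]
    · intro u w hadj
      have h1 := hx.2 hadj
      have hcase : ∀ a b : V, G.Adj a b → P a → 1 ≤ y a + y b := by
        intro a b hab hPa
        have hbX : b ∈ X := (hXvc hab).resolve_left hPa.2
        have hPb : ¬ P b := fun h => h.2 hbX
        have h1' := hx.2 hab
        by_cases hQb : Q b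
        · simp only [hy, if_pos hQb, if_pos hPa, if_neg (hPQ a hPa), if_neg hPb]
          linarith
        · have hbhalf : 1 / 2 ≤ x b := by
            by_contra h; exact hQb ⟨hbX, by linarith⟩
          simp only [hy, if_neg hQb, if_pos hPa, if_neg (hPQ a hPa), if_neg hPb]
          have := hεle a hPa
          linarith
      by_cases hPu : P u
      · exact hcase u w hadj hPu
      · by_cases hPw : P w
        · have := hcase w u hadj.symm hPw; linarith
        · simp only [hy, if_neg hPu, if_neg hPw]
          split_ifs <;> linarith [hεpos.le]
  have hsum : ∑ v, y v = ∑ v, x v + (ε * B.card - ε * A.card) := by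
    simp only [hy]
    rw [Finset.sum_add_distrib, Finset.sum_sub_distrib]
    congr 1
    congr 1
    · rw [← Finset.sum_filter, Finset.sum_const, ← hB, nsmul_eq_mul, mul_comm]
    · rw [← Finset.sum_filter, Finset.sum_const, ← hA, nsmul_eq_mul, mul_comm]
  have hlt : ∑ v, y v < ∑ v, x v := by
    rw [hsum]
    have : (B.card : ℝ) < A.card := by exact_mod_cast hcon
    nlinarith
  linarith [hopt y hyfrac]

theorem stmt_6 {V : Type*} [Fintype V] (G : SimpleGraph V) (k : ℕ) (x : V → ℝ)
    (hx : IsFracVC G x)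
    (hopt : ∀ y : V → ℝ, IsFracVC G y → ∑ v, x v ≤ ∑ v, y v)
    (hV1 : {v : V | 1 / 2 < x v}.ncard ≤ k) :
    HasVC G k ↔
      HasVC (G.induce {v : V | ¬ (x v < 1 / 2 ∨ 1 / 2 < x v)})
        (k - {v : V | 1 / 2 < x v}.ncard) := by
  unfold HasVC
  classical
  set V0 : Set V := {v : V | x v < 1 / 2} with hV0
  set V1 : Set V := {v : V | 1 / 2 < x v} with hV1def
  set Vh : Set V := {v : V | ¬ (x v < 1 / 2 ∨ 1 / 2 < x v)} with hVh
  constructor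
  · rintro ⟨X, hXvc, hXcard⟩
    refine ⟨Subtype.val ⁻¹' X, ?_, ?_⟩
    · intro u w hadj
      exact hXvc hadj
    · have himg : Subtype.val '' (Subtype.val ⁻¹' X : Set Vh) = X ∩ Vh := by
        rw [Set.image_preimage_eq_inter_range, Subtype.range_coe]
      have h1 : (Subtype.val ⁻¹' X : Set Vh).ncard = (X ∩ Vh).ncard := by
        rw [← himg, Set.ncard_image_of_injective _ Subtype.val_injective]
      have hpart : (X ∩ V0).ncard + ((X ∩ Vh).ncard + (X ∩ V1).ncard) = X.ncard := by
        have hun : X = (X ∩ V0) ∪ ((X ∩ Vh) ∪ (X ∩ V1)) := by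
          ext v
          simp only [Set.mem_union, Set.mem_inter_iff, hV0, hVh, hV1def, Set.mem_setOf_eq]
          rcases lt_trichotomy (x v) (1 / 2) with h | h | h <;>
            constructor <;> intro hv <;> first | tauto | (push_neg; constructor <;> tauto)
        have hd1 : Disjoint (X ∩ Vh) (X ∩ V1) := by
          rw [Set.disjoint_left]
          rintro v ⟨-, hv⟩ ⟨-, hv'⟩
          simp only [hVh, hV1def, Set.mem_setOf_eq] at hv hv'
          tauto
        have hd0 : Disjoint (X ∩ V0) ((X ∩ Vh) ∪ (X ∩ V1)) := by
          rw [Set.disjoint_left]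
          rintro v ⟨-, hv⟩ (⟨-, hv'⟩ | ⟨-, hv'⟩) <;>
            simp only [hVh, hV1def, hV0, Set.mem_setOf_eq] at hv hv' <;>
            first | tauto | linarith
        rw [← Set.ncard_union_eq hd1 (Set.toFinite _) (Set.toFinite _),
          ← Set.ncard_union_eq hd0 (Set.toFinite _) (Set.toFinite _), ← hun]
      have hV1part : (V1 ∩ X).ncard + (V1 \ X).ncard = V1.ncard :=
        Set.ncard_inter_add_ncard_diff_eq_ncard V1 X (Set.toFinite _)
      have hk := key G x hx hopt X hXvc
      rw [← hV0, ← hV1def] at hk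
      rw [h1]
      have : (X ∩ V1).ncard = (V1 ∩ X).ncard := by rw [Set.inter_comm]
      omega
  · rintro ⟨Y, hYvc, hYcard⟩
    refine ⟨Subtype.val '' Y ∪ V1, ?_, ?_⟩
    · intro u w hadj
      have h1 := hx.2 hadj
      by_cases hu : u ∈ V1
      · exact Or.inl (Set.mem_union_right _ hu)
      · by_cases hw : w ∈ V1
        · exact Or.inr (Set.mem_union_right _ hw)
        · simp only [hV1def, Set.mem_setOf_eq, not_lt] at hu hw
          have huh : u ∈ Vh := by
            simp only [hVh, Set.mem_setOf_eq]; push_neg; constructor <;> linarith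
          have hwh : w ∈ Vh := by
            simp only [hVh, Set.mem_setOf_eq]; push_neg; constructor <;> linarith
          have hadj' : (G.induce Vh).Adj ⟨u, huh⟩ ⟨w, hwh⟩ := hadj
          rcases hYvc hadj' with h | h
          · exact Or.inl (Set.mem_union_left _ ⟨⟨u, huh⟩, h, rfl⟩)
          · exact Or.inr (Set.mem_union_left _ ⟨⟨w, hwh⟩, h, rfl⟩)
    · have h2 : (Subtype.val '' Y ∪ V1).ncard ≤ (Subtype.val '' Y).ncard + V1.ncard :=
        Set.ncard_union_le _ _
      rw [Set.ncard_image_of_injective _ Subtype.val_injective] at h2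
      omega
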